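/- arXiv:1902.02754 — 4 statements merged into one kernel-verified Lean document; each statement's English description precedes it below -/
import Mathlib

section
/- In the polynomial ring ℂ[x₀, x₁, ..., x_n] with n ≥ 3, let J be the ideal generated by the 2×2 minors of the matrix [[x₁,...,x_{n-1}],[x₂,...,x_n]] together with the 2×2 minors of [[x₀,...,x_{n-2}],[x₁,...,x_{n-1}]]. Then for every 1 ≤ j ≤ n-1, the polynomial x_j·(x₀ x_n - x₁ x_{n-1}) lies in J. -/
open MvPolynomial
open Fin.NatCast

theorem stmt_13 (n : ℕ) (hn : 3 ≤ n)
    (J : Ideal (MvPolynomial (Fin (n + 1)) ℂ))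
    (hJ : J = Ideal.span
      ({p | ∃ a b : ℕ, 1 ≤ a ∧ a < b ∧ b ≤ n - 1 ∧
          p = X ((a : Fin (n + 1))) * X (((b + 1 : ℕ) : Fin (n + 1)))
            - X (((a + 1 : ℕ) : Fin (n + 1))) * X ((b : Fin (n + 1)))} ∪
       {p | ∃ a b : ℕ, a < b ∧ b ≤ n - 2 ∧
          p = X ((a : Fin (n + 1))) * X (((b + 1 : ℕ) : Fin (n + 1)))
            - X (((a + 1 : ℕ) : Fin (n + 1))) * X ((b : Fin (n + 1)))})) :
    ∀ j : ℕ, 1 ≤ j → j ≤ n - 1 →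
      X ((j : Fin (n + 1))) *
        (X ((0 : Fin (n + 1))) * X ((n : Fin (n + 1)))
          - X ((1 : Fin (n + 1))) * X (((n - 1 : ℕ) : Fin (n + 1)))) ∈ J := by
  intro j hj1 hj2
  have mem1 : ∀ a b : ℕ, 1 ≤ a → a < b → b ≤ n - 1 →
      (X ((a : Fin (n + 1))) * X (((b + 1 : ℕ) : Fin (n + 1)))
        - X (((a + 1 : ℕ) : Fin (n + 1))) * X ((b : Fin (n + 1)))) ∈ J := by
    intro a b h1 h2 h3
    rw [hJ]
    exact Ideal.subset_span (Or.inl ⟨a, b, h1, h2, h3, rfl⟩)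
  have mem2 : ∀ a b : ℕ, a < b → b ≤ n - 2 →
      (X ((a : Fin (n + 1))) * X (((b + 1 : ℕ) : Fin (n + 1)))
        - X (((a + 1 : ℕ) : Fin (n + 1))) * X ((b : Fin (n + 1)))) ∈ J := by
    intro a b h1 h2
    rw [hJ]
    exact Ideal.subset_span (Or.inr ⟨a, b, h1, h2, rfl⟩)
  have e1 : ((n - 1 + 1 : ℕ) : Fin (n + 1)) = ((n : ℕ) : Fin (n + 1)) := by
    congr 1; omega
  have e2 : ((n - 2 + 1 : ℕ) : Fin (n + 1)) = ((n - 1 : ℕ) : Fin (n + 1)) := by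
    congr 1; omega
  by_cases hc : j ≤ n - 2
  · have h1 := mem1 j (n - 1) hj1 (by omega) le_rfl
    have h2 := mem2 0 j (by omega) hc
    have key := J.add_mem (J.mul_mem_left (X ((0 : Fin (n + 1)))) h1)
      (J.mul_mem_left (X (((n - 1 : ℕ) : Fin (n + 1)))) h2)
    rw [e1] at key
    convert key using 1
    push_cast
    ring
  · have hj : j = n - 1 := by omega
    subst hj
    have h1 := mem1 (n - 2) (n - 1) (by omega) (by omega) le_rfl
    have h2 := mem2 0 (n - 2) (by omega) le_rfl
    have key := J.add_mem (J.mul_mem_left (X (((1 : ℕ) : Fin (n + 1)))) h1)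
      (J.mul_mem_left (X ((n : Fin (n + 1)))) h2)
    rw [e1, e2] at key
    convert key using 1
    push_cast
    ring
end

section
/- Let f₁, ..., f_m be polynomials in ℂ[x₀,...,x_n], homogeneous of degree 2, and let p̃ ∈ ℂ^{n+1} be a point such that f_i(p̃) = 0 for all i and the gradients ∇f₁(p̃), ..., ∇f_m(p̃) ∈ ℂ^{n+1} are linearly independent. If g₁, ..., g_m are homogeneous linear forms with Σᵢ gᵢ fᵢ = 0 (identically), then gᵢ(p̃) = 0 for every i. -/
open MvPolynomial

theorem stmt_16 (n m : ℕ) (f : Fin m → MvPolynomial (Fin (n + 1)) ℂ)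
    (hfhom : ∀ i, (f i).IsHomogeneous 2)
    (p : Fin (n + 1) → ℂ) (hvan : ∀ i, eval p (f i) = 0)
    (hind : LinearIndependent ℂ (fun i : Fin m => fun j : Fin (n + 1) => eval p (pderiv j (f i))))
    (g : Fin m → MvPolynomial (Fin (n + 1)) ℂ)
    (hghom : ∀ i, (g i).IsHomogeneous 1)
    (hsyz : ∑ i, g i * f i = 0) :
    ∀ i, eval p (g i) = 0 := by
  have key : ∀ j : Fin (n + 1),
      ∑ i, eval p (g i) * eval p (pderiv j (f i)) = 0 := by
    intro j
    have h := congrArg (fun q => eval p (pderiv j q)) hsyz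
    simp only [map_sum, map_mul, Derivation.leibniz, map_add, smul_eq_mul, map_zero] at h
    simp only [hvan, mul_zero, zero_add] at h
    simpa using h
  have := Fintype.linearIndependent_iff.mp hind (fun i => eval p (g i)) ?_
  · exact this
  · funext j
    simpa [Finset.sum_apply, mul_comm] using key j
end

section
/- Let P ⊂ ℝ^d be a lattice polytope whose lattice points are covered by k lines all parallel to a primitive vector v ∈ ℤ^d, with the i-th line containing a segment of lattice length a_i ≥ 0 of lattice points of P. Then there is an affine-linear map ℤ^k → ℤ^d inducing a bijection between the lattice points of the Lawrence prism P' = conv{0, e₁, ..., e_{k-1}, a₀e_k, e₁+a₁e_k, ..., e_{k-1}+a_{k-1}e_k} ⊂ ℝ^k and the lattice points of P. -/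
/-- The set of lattice points of a subset of `ℝ^d`. -/
def latticePoints {d : ℕ} (P : Set (Fin d → ℝ)) : Set (Fin d → ℤ) :=
  {z | (fun i => (z i : ℝ)) ∈ P}

/-- The `i`-th "bottom" vertex of the Lawrence prism in `ℝ^k`:
`0` for `i = 0` and the standard basis vector `e_i` for `1 ≤ i ≤ k-1`. -/
def lawrenceBottom (k : ℕ) (i : Fin k) : Fin k → ℝ :=
  if i.val = 0 then 0 else fun j => if j.val = i.val - 1 then 1 else 0

/-- The last standard basis vector `e_k` of `ℝ^k`. -/
def lawrenceHeightDir (k : ℕ) : Fin k → ℝ :=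
  fun j => if j.val = k - 1 then 1 else 0

/-- The vertex set `{0, e₁, …, e_{k-1}, a₀e_k, e₁+a₁e_k, …, e_{k-1}+a_{k-1}e_k}`
of the Lawrence prism. -/
def lawrenceVerts (k : ℕ) (a : Fin k → ℕ) : Set (Fin k → ℝ) :=
  (Set.range fun i : Fin k => lawrenceBottom k i) ∪
    (Set.range fun i : Fin k => lawrenceBottom k i + (a i : ℝ) • lawrenceHeightDir k)

namespace Stmt17Aux

/-- Integer version of `lawrenceBottom`. -/
def zbot (k : ℕ) (i : Fin k) : Fin k → ℤ :=
  if i.val = 0 then 0 else fun j => if j.val = i.val - 1 then 1 else 0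

/-- Integer version of `lawrenceHeightDir`. -/
def zdir (k : ℕ) : Fin k → ℤ := fun j => if j.val = k - 1 then 1 else 0

lemma zbot_apply_ne {k : ℕ} {i : Fin k} (hi : ¬ i.val = 0) (j : Fin k) :
    zbot k i j = if j.val = i.val - 1 then 1 else 0 := by
  simp [zbot, hi]

lemma cast_pt (k : ℕ) (i : Fin k) (t : ℤ) :
    (fun j => (((zbot k i + t • zdir k) j : ℤ) : ℝ)) =
      lawrenceBottom k i + (t : ℝ) • lawrenceHeightDir k := by
  funext j
  by_cases h : i.val = 0 <;>
    simp [zbot, zdir, lawrenceBottom, lawrenceHeightDir, h]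

lemma sum_ite_val {k : ℕ} {s : Finset (Fin k)} {c : Fin k} (hc : c ∈ s) (f : Fin k → ℝ) :
    ∑ j ∈ s, (if j.val = c.val then f j else 0) = f c := by
  rw [Finset.sum_eq_single_of_mem c hc]
  · simp
  · intro j _ hj
    simp [show j.val ≠ c.val from fun h => hj (Fin.ext h)]

lemma mem_prism_iff {k : ℕ} (hk : 1 ≤ k) (a : Fin k → ℕ) (z : Fin k → ℤ) :
    z ∈ latticePoints (convexHull ℝ (lawrenceVerts k a)) ↔
      ∃ i : Fin k, ∃ t : ℤ, 0 ≤ t ∧ t ≤ (a i : ℤ) ∧ z = zbot k i + t • zdir k := by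
  classical
  have hk0 : 0 < k := hk
  set lst : Fin k := ⟨k - 1, by omega⟩ with hlst
  have hlstval : lst.val = k - 1 := rfl
  set i0 : Fin k := ⟨0, hk0⟩ with hi0
  have hi0val : i0.val = 0 := rfl
  set E : Finset (Fin k) := Finset.univ.erase lst with hE
  set av : Fin k → ℝ := fun j => if h : j.val + 1 < k then (a ⟨j.val + 1, h⟩ : ℝ) else 0 with hav
  set S : (Fin k → ℝ) → ℝ := fun x => ∑ j ∈ E, x j with hS
  set T : (Fin k → ℝ) → ℝ := fun x => ∑ j ∈ E, av j * x j with hT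
  set H : Set (Fin k → ℝ) :=
    {x | (∀ j, j ≠ lst → 0 ≤ x j) ∧ S x ≤ 1 ∧ 0 ≤ x lst ∧
      x lst ≤ (a i0 : ℝ) * (1 - S x) + T x} with hH
  constructor
  · intro hz
    -- linearity facts
    have hSlin : ∀ (p q : ℝ) (x y : Fin k → ℝ), S (p • x + q • y) = p * S x + q * S y := by
      intro p q x y
      simp [hS, Finset.sum_add_distrib, Finset.mul_sum]
    have hTlin : ∀ (p q : ℝ) (x y : Fin k → ℝ), T (p • x + q • y) = p * T x + q * T y := by
      intro p q x y
      simp only [hT, Pi.add_apply, Pi.smul_apply, smul_eq_mul, mul_add, Finset.sum_add_distrib,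
        Finset.mul_sum]
      congr 1 <;> exact Finset.sum_congr rfl fun j _ => by ring
    have hconv : Convex ℝ H := by
      intro x hx y hy p q hp hq hpq
      obtain ⟨hx1, hx2, hx3, hx4⟩ := hx
      obtain ⟨hy1, hy2, hy3, hy4⟩ := hy
      refine ⟨?_, ?_, ?_, ?_⟩
      · intro j hj
        have := hx1 j hj; have := hy1 j hj
        simp only [Pi.add_apply, Pi.smul_apply, smul_eq_mul]
        nlinarith
      · rw [hSlin]; nlinarith
      · simp only [Pi.add_apply, Pi.smul_apply, smul_eq_mul]; nlinarith
      · rw [hSlin, hTlin]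
        simp only [Pi.add_apply, Pi.smul_apply, smul_eq_mul]
        nlinarith [mul_le_mul_of_nonneg_left hx4 hp, mul_le_mul_of_nonneg_left hy4 hq]
    have hbotH : ∀ i : Fin k, lawrenceBottom k i ∈ H := by
      intro i
      by_cases hi : i.val = 0
      · -- bottom, i = 0
        simp only [hH, Set.mem_setOf_eq, lawrenceBottom, hi, if_pos]
        refine ⟨fun j _ => le_refl 0, ?_, le_refl 0, ?_⟩ <;>
          simp [hS, hT]
      · -- bottom, i ≠ 0
        have hik : 1 ≤ i.val ∧ i.val < k := ⟨Nat.one_le_iff_ne_zero.mpr hi, i.isLt⟩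
        have hk2 : 2 ≤ k := by omega
        set c : Fin k := ⟨i.val - 1, by omega⟩ with hc
        have hcE : c ∈ E := by
          simp [hE, Finset.mem_erase]
          intro h
          have : c.val = lst.val := by rw [h]
          simp [hc, hlst] at this
          omega
        have hxj : lawrenceBottom k i = fun j => if j.val = c.val then 1 else 0 := by
          simp [lawrenceBottom, hi, hc]
        simp only [hH, Set.mem_setOf_eq]
        refine ⟨?_, ?_, ?_, ?_⟩
        · intro j _; simp only [hxj]; split_ifs <;> norm_num
        · simp only [hxj, hS]
          rw [sum_ite_val hcE (fun _ => (1:ℝ))]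
        · simp only [hxj]
          have : lst.val ≠ c.val := by simp [hlstval, hc]; omega
          simp [this]
        · simp only [hxj]
          have hlc : lst.val ≠ c.val := by simp [hlst, hc]; omega
          simp only [hS, hT, if_neg hlc]
          rw [sum_ite_val hcE (fun _ => (1:ℝ))]
          have : ∑ j ∈ E, av j * (if j.val = c.val then (1:ℝ) else 0)
              = ∑ j ∈ E, (if j.val = c.val then av j else 0) := by
            refine Finset.sum_congr rfl fun j _ => by split_ifs <;> ring
          rw [this, sum_ite_val hcE av]
          have hc1 : c.val + 1 < k := by simp [hc]; omega
          have : av c = (a i : ℝ) := by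
            have h2 : (⟨c.val + 1, hc1⟩ : Fin k) = i := by ext; simp [hc]; omega
            simp [hav, hc1, h2]
          rw [this]
          positivity
    have htopH : ∀ i : Fin k,
        lawrenceBottom k i + (a i : ℝ) • lawrenceHeightDir k ∈ H := by
      intro i
      by_cases hi : i.val = 0
      · -- top, i = 0
        have hx : lawrenceBottom k i + (a i : ℝ) • lawrenceHeightDir k
            = fun j => if j.val = k - 1 then (a i : ℝ) else 0 := by
          funext j
          simp [lawrenceBottom, lawrenceHeightDir, hi]
        have hii : i = i0 := Fin.ext hi
        simp only [hH, Set.mem_setOf_eq]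
        rw [hx]
        refine ⟨?_, ?_, ?_, ?_⟩
        · intro j hj
          have : j.val ≠ k - 1 := fun h => hj (Fin.ext h)
          simp [this]
        · simp only [hS]
          have : ∀ j ∈ E, (if j.val = k - 1 then (a i : ℝ) else 0) = 0 := by
            intro j hj
            have : j.val ≠ k - 1 := fun h => (Finset.mem_erase.mp hj).1 (Fin.ext h)
            simp [this]
          rw [Finset.sum_congr rfl this]; simp
        · simp [hlstval]
        · simp only [hS, hT, hlstval, if_pos rfl]
          have h0 : ∀ j ∈ E, (if j.val = k - 1 then (a i : ℝ) else 0) = 0 := by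
            intro j hj
            have : j.val ≠ k - 1 := fun h => (Finset.mem_erase.mp hj).1 (Fin.ext h)
            simp [this]
          have h1 : ∀ j ∈ E, av j * (if j.val = k - 1 then (a i : ℝ) else 0) = 0 := by
            intro j hj; rw [h0 j hj]; ring
          rw [Finset.sum_congr rfl h0, Finset.sum_congr rfl h1, hii]
          simp
      · -- top, i ≠ 0
        have hik : 1 ≤ i.val ∧ i.val < k := ⟨Nat.one_le_iff_ne_zero.mpr hi, i.isLt⟩
        have hk2 : 2 ≤ k := by omega
        set c : Fin k := ⟨i.val - 1, by omega⟩ with hc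
        have hclt : c.val < k - 1 := by simp [hc]; omega
        have hcE : c ∈ E := by
          refine Finset.mem_erase.mpr ⟨?_, Finset.mem_univ _⟩
          intro h
          have : c.val = lst.val := by rw [h]
          simp [hlst] at this
          omega
        have hx : lawrenceBottom k i + (a i : ℝ) • lawrenceHeightDir k
            = fun j => (if j.val = c.val then 1 else 0) + (if j.val = k - 1 then (a i : ℝ) else 0) := by
          funext j
          simp [lawrenceBottom, lawrenceHeightDir, hi, hc]
        simp only [hH, Set.mem_setOf_eq]
        rw [hx]
        have hEzero : ∀ j ∈ E, ((if j.val = c.val then (1:ℝ) else 0) + (if j.val = k - 1 then (a i : ℝ) else 0))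
            = (if j.val = c.val then 1 else 0) := by
          intro j hj
          have : j.val ≠ k - 1 := fun h => (Finset.mem_erase.mp hj).1 (Fin.ext h)
          simp [this]
        refine ⟨?_, ?_, ?_, ?_⟩
        · intro j _; simp only; split_ifs <;> positivity
        · simp only [hS]
          rw [Finset.sum_congr rfl hEzero, sum_ite_val hcE (fun _ => (1:ℝ))]
        · show (0:ℝ) ≤ (if lst.val = c.val then (1:ℝ) else 0) + (if lst.val = k - 1 then (a i : ℝ) else 0)
          have h1 : ¬ (lst.val = c.val) := by simp [hlstval, hc]; omega
          rw [if_neg h1, if_pos hlstval]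
          positivity
        · show ((if lst.val = c.val then (1:ℝ) else 0) + (if lst.val = k - 1 then (a i : ℝ) else 0)) ≤ _
          have h1 : ¬ (lst.val = c.val) := by simp [hlstval, hc]; omega
          rw [if_neg h1, if_pos hlstval]
          simp only [hS, hT]
          rw [Finset.sum_congr rfl hEzero, sum_ite_val hcE (fun _ => (1:ℝ))]
          have hT1 : ∀ j ∈ E, av j * ((if j.val = c.val then (1:ℝ) else 0) + (if j.val = k - 1 then (a i : ℝ) else 0))
              = (if j.val = c.val then av j else 0) := by
            intro j hj
            rw [hEzero j hj]
            split_ifs <;> ring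
          rw [Finset.sum_congr rfl hT1, sum_ite_val hcE av]
          have hc1 : c.val + 1 < k := by omega
          have : av c = (a i : ℝ) := by
            have h3 : (⟨c.val + 1, hc1⟩ : Fin k) = i := by ext; simp [hc]; omega
            simp [hav, hc1, h3]
          rw [this]
          simp
    have hverts : lawrenceVerts k a ⊆ H := by
      rintro x (⟨i, rfl⟩ | ⟨i, rfl⟩)
      exacts [hbotH i, htopH i]
    have hzH : (fun j => (z j : ℝ)) ∈ H := convexHull_min hverts hconv hz
    have h1 : ∀ j, j ≠ lst → (0:ℝ) ≤ (z j : ℝ) := hzH.1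
    have h2 : S (fun j => (z j : ℝ)) ≤ 1 := hzH.2.1
    have h3 : (0:ℝ) ≤ (z lst : ℝ) := hzH.2.2.1
    have h4 : (z lst : ℝ) ≤ (a i0 : ℝ) * (1 - S (fun j => (z j : ℝ))) + T (fun j => (z j : ℝ)) :=
      hzH.2.2.2
    have hint1 : ∀ j ∈ E, 0 ≤ z j := by
      intro j hj
      have := h1 j (Finset.mem_erase.mp hj).1
      exact_mod_cast this
    have hint2 : (∑ j ∈ E, z j) ≤ 1 := by
      have : ((∑ j ∈ E, z j : ℤ) : ℝ) ≤ 1 := by push_cast; exact h2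
      exact_mod_cast this
    by_cases hall : ∀ j ∈ E, z j = 0
    · refine ⟨i0, z lst, by exact_mod_cast h3, ?_, ?_⟩
      · have hS0 : S (fun j => (z j : ℝ)) = 0 := by
          simp only [hS]
          exact Finset.sum_eq_zero fun j hj => by rw [hall j hj]; norm_num
        have hT0 : T (fun j => (z j : ℝ)) = 0 := by
          simp only [hT]
          exact Finset.sum_eq_zero fun j hj => by rw [hall j hj]; norm_num
        rw [hS0, hT0] at h4
        simp at h4
        exact_mod_cast h4
      · funext j
        by_cases hj : j = lst
        · subst hj
          have hb : zbot k i0 = 0 := by simp [zbot, hi0val]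
          have hd : zdir k lst = 1 := by simp [zdir, hlstval]
          simp [hb, hd]
        · have hjE : j ∈ E := Finset.mem_erase.mpr ⟨hj, Finset.mem_univ _⟩
          have hjv : j.val ≠ k - 1 := fun h => hj (Fin.ext h)
          have hb : zbot k i0 = 0 := by simp [zbot, hi0val]
          have hd : zdir k j = 0 := by simp [zdir, hjv]
          simp [hb, hd, hall j hjE]
    · push_neg at hall
      obtain ⟨j0, hj0E, hj0ne⟩ := hall
      have hj0lt : j0.val < k - 1 := by
        have h1 := (Finset.mem_erase.mp hj0E).1
        have : j0.val ≠ k - 1 := fun h => h1 (Fin.ext h)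
        omega
      have hsplit : z j0 + ∑ j ∈ E.erase j0, z j = ∑ j ∈ E, z j :=
        Finset.add_sum_erase E z hj0E
      have hrest : 0 ≤ ∑ j ∈ E.erase j0, z j :=
        Finset.sum_nonneg fun j hj => hint1 j (Finset.mem_of_mem_erase hj)
      have hj01 : z j0 = 1 := by
        have := hint1 j0 hj0E
        omega
      have hzero : ∀ j ∈ E, j ≠ j0 → z j = 0 := by
        intro j hj hne
        have hrest0 : ∑ j ∈ E.erase j0, z j = 0 := by omega
        have := (Finset.sum_eq_zero_iff_of_nonneg
          (fun j hj => hint1 j (Finset.mem_of_mem_erase hj))).mp hrest0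
        exact this j (Finset.mem_erase.mpr ⟨hne, hj⟩)
      set i : Fin k := ⟨j0.val + 1, by omega⟩ with hi
      have hival : i.val = j0.val + 1 := rfl
      have hine : ¬ i.val = 0 := by omega
      refine ⟨i, z lst, by exact_mod_cast h3, ?_, ?_⟩
      · have hS1 : S (fun j => (z j : ℝ)) = 1 := by
          simp only [hS]
          rw [Finset.sum_eq_single_of_mem j0 hj0E]
          · rw [hj01]; norm_num
          · intro j hj hne; rw [hzero j hj hne]; norm_num
        have hTv : T (fun j => (z j : ℝ)) = (a i : ℝ) := by
          simp only [hT]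
          rw [Finset.sum_eq_single_of_mem j0 hj0E]
          · rw [hj01]
            have hc1 : j0.val + 1 < k := by omega
            have hmk : (⟨j0.val + 1, hc1⟩ : Fin k) = i := rfl
            simp [hav, hc1, hmk]
          · intro j hj hne; rw [hzero j hj hne]; norm_num
        rw [hS1, hTv] at h4
        simp at h4
        exact_mod_cast h4
      · funext j
        by_cases hj : j = lst
        · subst hj
          have h5 : ¬ lst.val = i.val - 1 := by rw [hlstval, hival]; omega
          have hd : zdir k lst = 1 := by simp [zdir, hlstval]
          have hb : zbot k i lst = 0 := by rw [zbot_apply_ne hine, if_neg h5]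
          simp [hb, hd]
        · have hjE : j ∈ E := Finset.mem_erase.mpr ⟨hj, Finset.mem_univ _⟩
          have hjv : j.val ≠ k - 1 := fun h => hj (Fin.ext h)
          have hd : zdir k j = 0 := by simp [zdir, hjv]
          by_cases hjj0 : j = j0
          · subst hjj0
            have h5 : j.val = i.val - 1 := by rw [hival]; omega
            have hb : zbot k i j = 1 := by rw [zbot_apply_ne hine, if_pos h5]
            simp [hb, hd, hj01]
          · have h5 : ¬ j.val = i.val - 1 := by
              rw [hival]
              intro h
              exact hjj0 (Fin.ext (by omega))
            have hb : zbot k i j = 0 := by rw [zbot_apply_ne hine, if_neg h5]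
            simp [hb, hd, hzero j hjE hjj0]
  · rintro ⟨i, t, ht0, hta, rfl⟩
    have hB : lawrenceBottom k i ∈ convexHull ℝ (lawrenceVerts k a) :=
      subset_convexHull _ _ (Or.inl ⟨i, rfl⟩)
    have hTp : lawrenceBottom k i + (a i : ℝ) • lawrenceHeightDir k ∈ convexHull ℝ (lawrenceVerts k a) :=
      subset_convexHull _ _ (Or.inr ⟨i, rfl⟩)
    by_cases ha : a i = 0
    · have ht : t = 0 := by omega
      subst ht
      have : (fun j => (((zbot k i + (0:ℤ) • zdir k) j : ℤ) : ℝ))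
          ∈ convexHull ℝ (lawrenceVerts k a) := by
        rw [cast_pt]; simpa using hB
      exact this
    · have hapos : (0:ℝ) < (a i : ℝ) := by
        have : 0 < a i := Nat.pos_of_ne_zero ha
        exact_mod_cast this
      set μ : ℝ := (t : ℝ) / (a i : ℝ) with hμ
      have ht0' : (0:ℝ) ≤ (t:ℝ) := by exact_mod_cast ht0
      have hμ0 : 0 ≤ μ := div_nonneg ht0' hapos.le
      have hμ1 : μ ≤ 1 := by
        rw [hμ, div_le_one hapos]; exact_mod_cast hta
      have hμa : μ * (a i : ℝ) = (t : ℝ) := div_mul_cancel₀ _ (ne_of_gt hapos)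
      have hcomb := (convex_convexHull ℝ (lawrenceVerts k a)) hB hTp
        (by linarith : (0:ℝ) ≤ 1 - μ) hμ0 (by ring)
      have heq : (1 - μ) • lawrenceBottom k i
            + μ • (lawrenceBottom k i + (a i : ℝ) • lawrenceHeightDir k)
          = lawrenceBottom k i + (t : ℝ) • lawrenceHeightDir k := by
        rw [← hμa]; module
      have : (fun j => (((zbot k i + t • zdir k) j : ℤ) : ℝ))
          ∈ convexHull ℝ (lawrenceVerts k a) := by
        rw [cast_pt, ← heq]; exact hcomb
      exact this

/-- The linear map sending `e_j` to `w j`. -/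
def Lmap {k d : ℕ} (w : Fin k → (Fin d → ℤ)) : (Fin k → ℤ) →ₗ[ℤ] (Fin d → ℤ) where
  toFun z := ∑ j, z j • w j
  map_add' x y := by simp [add_smul, Finset.sum_add_distrib]
  map_smul' c x := by simp [mul_smul, Finset.smul_sum]

end Stmt17Aux

open Stmt17Aux in
theorem stmt_17 (d k : ℕ) (hk : 1 ≤ k)
    (V : Finset (Fin d → ℤ))
    (P : Set (Fin d → ℝ))
    (hP : P = convexHull ℝ ((fun (z : Fin d → ℤ) (i : Fin d) => (z i : ℝ)) '' ↑V))
    (v : Fin d → ℤ)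
    (hprim : ∀ (c : ℤ) (w : Fin d → ℤ), v = c • w → IsUnit c)
    (b : Fin k → (Fin d → ℤ)) (a : Fin k → ℕ)
    (hdistinct : ∀ i j : Fin k, i ≠ j → ∀ t : ℤ, b i ≠ b j + t • v)
    (hcover : latticePoints P =
      ⋃ i : Fin k, {z : Fin d → ℤ | ∃ t : ℤ, 0 ≤ t ∧ t ≤ (a i : ℤ) ∧ z = b i + t • v}) :
    ∃ (L : (Fin k → ℤ) →ₗ[ℤ] (Fin d → ℤ)) (c : Fin d → ℤ),
      Set.BijOn (fun z => L z + c)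
        (latticePoints (convexHull ℝ (lawrenceVerts k a)))
        (latticePoints P) := by
  classical
  have hk0 : 0 < k := hk
  set i0 : Fin k := ⟨0, hk0⟩ with hi0
  set w : Fin k → (Fin d → ℤ) :=
    fun j => if h : j.val + 1 < k then b ⟨j.val + 1, h⟩ - b i0 else v with hw
  have hzdirsum : (∑ j : Fin k, zdir k j • w j) = v := by
    rw [Finset.sum_eq_single (⟨k - 1, by omega⟩ : Fin k)]
    · have : ¬ (k - 1 + 1 < k) := by omega
      simp [zdir, hw, this]
    · intro j _ hj
      have : j.val ≠ k - 1 := fun h => hj (Fin.ext h)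
      simp [zdir, this]
    · simp
  have hzbotsum : ∀ i : Fin k, (∑ j : Fin k, zbot k i j • w j) = b i - b i0 := by
    intro i
    by_cases hi : i.val = 0
    · have hii : i = i0 := Fin.ext hi
      subst hii
      simp [zbot, hi]
    · rw [Finset.sum_eq_single (⟨i.val - 1, by omega⟩ : Fin k)]
      · have h1 : i.val - 1 + 1 < k := by omega
        have h2 : (⟨i.val - 1 + 1, h1⟩ : Fin k) = i := by
          ext; simp; omega
        simp [zbot, hi, hw, h1, h2]
      · intro j _ hj
        have : j.val ≠ i.val - 1 := fun h => hj (Fin.ext h)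
        simp [zbot, hi, this]
      · simp
  have key : ∀ (i : Fin k) (t : ℤ),
      Lmap w (zbot k i + t • zdir k) + b i0 = b i + t • v := by
    intro i t
    have : Lmap w (zbot k i + t • zdir k)
        = (∑ j : Fin k, zbot k i j • w j) + t • (∑ j : Fin k, zdir k j • w j) := by
      rw [map_add, map_smul]
      rfl
    rw [this, hzbotsum, hzdirsum]
    abel
  have hv0 : v ≠ 0 := by
    intro h
    have := hprim 0 0 (by rw [h]; simp)
    simp [Int.isUnit_iff] at this
  obtain ⟨jv, hjv⟩ := Function.ne_iff.mp hv0
  have hjv' : v jv ≠ 0 := by simpa using hjv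
  refine ⟨Lmap w, b i0, ?_, ?_, ?_⟩
  · intro z hz
    obtain ⟨i, t, ht0, hta, rfl⟩ := (mem_prism_iff hk a z).mp hz
    simp only [Set.mem_setOf_eq]
    rw [key, hcover]
    exact Set.mem_iUnion.mpr ⟨i, t, ht0, hta, rfl⟩
  · intro z1 h1 z2 h2 heq
    obtain ⟨j1, t1, ht10, ht1a, rfl⟩ := (mem_prism_iff hk a z1).mp h1
    obtain ⟨j2, t2, ht20, ht2a, rfl⟩ := (mem_prism_iff hk a z2).mp h2
    simp only at heq
    rw [key, key] at heq
    by_cases hjj : j1 = j2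
    · subst hjj
      have ht : t1 = t2 := by
        have := congrFun heq jv
        simp only [Pi.add_apply, Pi.smul_apply, smul_eq_mul] at this
        have h2 : t1 * v jv = t2 * v jv := by linarith
        exact mul_right_cancel₀ hjv' h2
      rw [ht]
    · exact absurd (funext fun j => by
        have := congrFun heq j
        simp only [Pi.add_apply, Pi.smul_apply, smul_eq_mul] at this ⊢
        linear_combination this) (hdistinct j1 j2 hjj (t2 - t1))
  · intro y hy
    rw [hcover] at hy
    obtain ⟨i, t, ht0, hta, rfl⟩ := Set.mem_iUnion.mp hy
    refine ⟨zbot k i + t • zdir k, (mem_prism_iff hk a _).mpr ⟨i, t, ht0, hta, rfl⟩, ?_⟩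
    simp only
    rw [key]
end

section
/- Let A ⊆ Sym_{n+1}(ℝ) be an affine subspace of real symmetric (n+1)×(n+1) matrices whose intersection with the cone of positive semidefinite matrices is nonempty and compact, and let r ≥ 0 be an integer with codim(A) < C(r+2, 2). Then A contains a positive semidefinite matrix of rank at most r. -/
open Matrix


open Finset in
lemma card_le_pairs {N : ℕ} (T : Finset (Fin N)) :
    ((T ×ˢ T).filter fun p => p.1 ≤ p.2).card = T.card * (T.card + 1) / 2 := by
  classical
  set t := T.card
  have h1 : ((T ×ˢ T).filter fun p => p.1 ≤ p.2).card
      + ((T ×ˢ T).filter fun p => ¬ p.1 ≤ p.2).card = t * t := by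
    rw [Finset.card_filter_add_card_filter_not, Finset.card_product]
  have h2 : ((T ×ˢ T).filter fun p => ¬ p.1 ≤ p.2).card
      = ((T ×ˢ T).filter fun p => p.1 < p.2).card := by
    apply Finset.card_bij (fun p _ => Prod.swap p)
    · rintro ⟨a, b⟩ hp
      simp only [Finset.mem_filter, Finset.mem_product, not_le] at hp ⊢
      exact ⟨⟨hp.1.2, hp.1.1⟩, hp.2⟩
    · rintro ⟨a,b⟩ _ ⟨c,d⟩ _ h
      simpa [Prod.ext_iff, and_comm] using h
    · rintro ⟨a, b⟩ hp
      refine ⟨(b, a), ?_, rfl⟩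
      simp only [Finset.mem_filter, Finset.mem_product, not_le] at hp ⊢
      exact ⟨⟨hp.1.2, hp.1.1⟩, hp.2⟩
  have h3 : ((T ×ˢ T).filter fun p => p.1 ≤ p.2).card
      = ((T ×ˢ T).filter fun p => p.1 < p.2).card + t := by
    have : ((T ×ˢ T).filter fun p => p.1 ≤ p.2)
        = ((T ×ˢ T).filter fun p => p.1 < p.2) ∪ ((T ×ˢ T).filter fun p => p.1 = p.2) := by
      rw [← Finset.filter_or]
      apply Finset.filter_congr
      rintro ⟨a,b⟩ _
      simp [le_iff_lt_or_eq]
    rw [this, Finset.card_union_of_disjoint]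
    · congr 1
      apply Finset.card_bij (fun p _ => p.1)
      · rintro ⟨a,b⟩ hp
        simp only [Finset.mem_filter, Finset.mem_product] at hp
        exact hp.1.1
      · rintro ⟨a,b⟩ ha ⟨c,d⟩ hc h
        simp only [Finset.mem_filter, Finset.mem_product] at ha hc
        simp only at h
        subst h
        simp [Prod.ext_iff, ← ha.2, ← hc.2]
      · intro a ha
        exact ⟨(a, a), by simp [ha], rfl⟩
    · rw [Finset.disjoint_filter]
      rintro ⟨a,b⟩ _ h
      simp only at h ⊢
      exact fun he => absurd he (ne_of_lt h)
  have ht : t * t = t * t := rfl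
  set k := t * t
  set c := ((T ×ˢ T).filter fun p => p.1 ≤ p.2).card
  set d := ((T ×ˢ T).filter fun p => p.1 < p.2).card
  have : t * (t+1) = k + t := by ring
  omega


def SymSupp {N : ℕ} (T : Finset (Fin N)) : Submodule ℝ (Matrix (Fin N) (Fin N) ℝ) where
  carrier := {H | H.IsSymm ∧ ∀ i j, (i ∉ T ∨ j ∉ T) → H i j = 0}
  add_mem' := by
    rintro a b ⟨ha, ha2⟩ ⟨hb, hb2⟩
    exact ⟨Matrix.IsSymm.add ha hb, fun i j h => by simp [Matrix.add_apply, ha2 i j h, hb2 i j h]⟩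
  zero_mem' := ⟨Matrix.isSymm_zero, by simp⟩
  smul_mem' := by
    rintro c a ⟨ha, ha2⟩
    refine ⟨Matrix.IsSymm.smul ha c, fun i j h => by simp [Matrix.smul_apply, ha2 i j h]⟩

lemma SymSupp.apply_symm {N : ℕ} {T : Finset (Fin N)} {H : Matrix (Fin N) (Fin N) ℝ}
    (hH : H ∈ SymSupp T) (i j : Fin N) : H i j = H j i := by
  conv_lhs => rw [← hH.1]
  rfl

noncomputable def symFill {N : ℕ} (T : Finset (Fin N))
    (f : {p : Fin N × Fin N // p ∈ (T ×ˢ T).filter fun p => p.1 ≤ p.2} → ℝ) :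
    Matrix (Fin N) (Fin N) ℝ := fun i j =>
  if h : (i, j) ∈ (T ×ˢ T).filter (fun p => p.1 ≤ p.2) then f ⟨(i,j), h⟩
  else if h2 : (j, i) ∈ (T ×ˢ T).filter (fun p => p.1 ≤ p.2) then f ⟨(j,i), h2⟩ else 0

lemma symFill_mem {N : ℕ} (T : Finset (Fin N)) (f) : symFill T f ∈ SymSupp T := by
  constructor
  · ext j i
    simp only [Matrix.transpose_apply, symFill]
    by_cases h1 : (i, j) ∈ (T ×ˢ T).filter (fun p => p.1 ≤ p.2) <;>
      by_cases h2 : (j, i) ∈ (T ×ˢ T).filter (fun p => p.1 ≤ p.2) <;>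
      simp only [h1, h2, dif_pos, dif_neg, dite_true, dite_false]
    have : i = j := by
      simp only [Finset.mem_filter, Finset.mem_product] at h1 h2
      exact le_antisymm h1.2 h2.2
    subst this; rfl
  · intro i j hij
    have h1 : (i, j) ∉ (T ×ˢ T).filter (fun p => p.1 ≤ p.2) := by
      simp only [Finset.mem_filter, Finset.mem_product]; tauto
    have h2 : (j, i) ∉ (T ×ˢ T).filter (fun p => p.1 ≤ p.2) := by
      simp only [Finset.mem_filter, Finset.mem_product]; tauto
    simp [symFill, h1, h2]

noncomputable def symSuppEquiv {N : ℕ} (T : Finset (Fin N)) :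
    SymSupp T ≃ₗ[ℝ] ({p : Fin N × Fin N // p ∈ (T ×ˢ T).filter fun p => p.1 ≤ p.2} → ℝ) where
  toFun := fun H p => (H : Matrix (Fin N) (Fin N) ℝ) p.1.1 p.1.2
  map_add' := fun a b => rfl
  map_smul' := fun c a => rfl
  invFun := fun f => ⟨symFill T f, symFill_mem T f⟩
  left_inv := by
    rintro ⟨H, hH⟩
    ext i j
    simp only [symFill]
    by_cases h1 : (i, j) ∈ (T ×ˢ T).filter (fun p => p.1 ≤ p.2)
    · simp [h1]
    · by_cases h2 : (j, i) ∈ (T ×ˢ T).filter (fun p => p.1 ≤ p.2)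
      · simp only [h1, h2, dif_neg, dif_pos, dite_false, dite_true]
        exact (SymSupp.apply_symm hH j i)
      · simp only [h1, h2, dif_neg, dite_false]
        refine (hH.2 i j ?_).symm
        simp only [Finset.mem_filter, Finset.mem_product, not_and, not_le] at h1 h2
        by_contra hc
        push_neg at hc
        rcases le_or_gt i j with h | h
        · exact absurd (h1 ⟨hc.1, hc.2⟩) (by simpa using h)
        · exact absurd (h2 ⟨hc.2, hc.1⟩) (by simpa using h.le)
  right_inv := by
    intro f
    funext p
    obtain ⟨⟨i, j⟩, hp⟩ := p
    simp [symFill, hp]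

open Finset in
lemma finrank_symSupp {N : ℕ} (T : Finset (Fin N))
    (hcard : ((T ×ˢ T).filter fun p => p.1 ≤ p.2).card = T.card * (T.card + 1) / 2) :
    Module.finrank ℝ (SymSupp T) = T.card * (T.card + 1) / 2 := by
  classical
  rw [(symSuppEquiv T).finrank_eq]
  rw [Module.finrank_fintype_fun_eq_card, Fintype.card_coe, hcard]

lemma key_psd {N : ℕ} (ev : Fin N → ℝ) (hev : ∀ i, 0 ≤ ev i) (T : Finset (Fin N))
    (δ : ℝ) (hδ : 0 < δ) (hT : ∀ i ∈ T, δ ≤ ev i)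
    {S : Matrix (Fin N) (Fin N) ℝ} (hS : S ∈ SymSupp T) :
    ∃ ε : ℝ, 0 < ε ∧ PosSemidef (diagonal ev + ε • S) ∧ PosSemidef (diagonal ev - ε • S) := by
  classical
  set C : ℝ := ∑ i, ∑ j, |S i j| with hC
  have hC0 : 0 ≤ C := Finset.sum_nonneg fun i _ => Finset.sum_nonneg fun j _ => abs_nonneg _
  refine ⟨δ / (C + 1), by positivity, ?_⟩
  have hherm : ∀ c : ℝ, (diagonal ev + c • S).IsHermitian := by
    intro c
    rw [Matrix.IsHermitian, conjTranspose_eq_transpose_of_trivial]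
    show (diagonal ev + c • S)ᵀ = _
    rw [transpose_add, transpose_smul, hS.1, diagonal_transpose]
  have main : ∀ c : ℝ, |c| * C ≤ δ → PosSemidef (diagonal ev + c • S) := by
    intro c hc
    refine PosSemidef.of_dotProduct_mulVec_nonneg (hherm c) fun x => ?_
    have hexp : star x ⬝ᵥ ((diagonal ev + c • S) *ᵥ x)
        = (∑ i, ev i * (x i * x i)) + c * ∑ i, ∑ j, x i * (S i j * x j) := by
      rw [add_mulVec, dotProduct_add]
      congr 1
      · simp only [dotProduct, mulVec_diagonal, star_trivial]
        exact Finset.sum_congr rfl fun i _ => by ring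
      · rw [smul_mulVec, dotProduct_smul, smul_eq_mul]
        congr 1
        simp [dotProduct, mulVec, Finset.mul_sum]
    rw [hexp]
    set Q : ℝ := ∑ i ∈ T, x i * x i with hQ
    have hQ0 : 0 ≤ Q := Finset.sum_nonneg fun i _ => mul_self_nonneg _
    have hsq : ∀ i ∈ T, x i * x i ≤ Q := fun i hi =>
      Finset.single_le_sum (f := fun k => x k * x k) (fun k _ => mul_self_nonneg _) hi
    -- bound each term
    have hterm : ∀ i j, |x i * (S i j * x j)| ≤ |S i j| * Q := by
      intro i j
      by_cases hij : S i j = 0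
      · simp [hij]
      · have hiT : i ∈ T := by
          by_contra h
          exact hij (hS.2 i j (Or.inl h))
        have hjT : j ∈ T := by
          by_contra h
          exact hij (hS.2 i j (Or.inr h))
        have h1 : |x i * x j| ≤ Q := by
          have hi2 := hsq i hiT
          have hj2 := hsq j hjT
          rw [abs_mul]
          nlinarith [sq_nonneg (|x i| - |x j|), abs_nonneg (x i), abs_nonneg (x j),
            abs_mul_abs_self (x i), abs_mul_abs_self (x j)]
        calc |x i * (S i j * x j)| = |S i j| * |x i * x j| := by
              rw [← abs_mul]; congr 1; ring
          _ ≤ |S i j| * Q := by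
              exact mul_le_mul_of_nonneg_left h1 (abs_nonneg _)
    have hquad : |∑ i, ∑ j, x i * (S i j * x j)| ≤ C * Q := by
      calc |∑ i, ∑ j, x i * (S i j * x j)| ≤ ∑ i, |∑ j, x i * (S i j * x j)| :=
            Finset.abs_sum_le_sum_abs _ _
        _ ≤ ∑ i, ∑ j, |x i * (S i j * x j)| :=
            Finset.sum_le_sum fun i _ => Finset.abs_sum_le_sum_abs _ _
        _ ≤ ∑ i, ∑ j, |S i j| * Q :=
            Finset.sum_le_sum fun i _ => Finset.sum_le_sum fun j _ => hterm i j
        _ = C * Q := by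
              rw [hC, Finset.sum_mul]
              exact Finset.sum_congr rfl fun i _ => (Finset.sum_mul _ _ _).symm
    have hdiag : δ * Q ≤ ∑ i, ev i * (x i * x i) := by
      calc δ * Q = ∑ i ∈ T, δ * (x i * x i) := by rw [hQ, Finset.mul_sum]
        _ ≤ ∑ i ∈ T, ev i * (x i * x i) :=
            Finset.sum_le_sum fun i hi => mul_le_mul_of_nonneg_right (hT i hi) (mul_self_nonneg _)
        _ ≤ ∑ i, ev i * (x i * x i) :=
            Finset.sum_le_sum_of_subset_of_nonneg (Finset.subset_univ T)
              (fun i _ _ => mul_nonneg (hev i) (mul_self_nonneg _))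
    have habs : |c * ∑ i, ∑ j, x i * (S i j * x j)| ≤ δ * Q := by
      rw [abs_mul]
      calc |c| * |∑ i, ∑ j, x i * (S i j * x j)| ≤ |c| * (C * Q) :=
            mul_le_mul_of_nonneg_left hquad (abs_nonneg _)
        _ = (|c| * C) * Q := by ring
        _ ≤ δ * Q := mul_le_mul_of_nonneg_right hc hQ0
    have := neg_abs_le (c * ∑ i, ∑ j, x i * (S i j * x j))
    linarith
  have hεC : |δ / (C + 1)| * C ≤ δ := by
    rw [abs_of_pos (by positivity)]
    rw [div_mul_eq_mul_div, div_le_iff₀ (by linarith)]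
    nlinarith
  refine ⟨main _ hεC, ?_⟩
  have := main (-(δ / (C + 1))) (by rwa [abs_neg])
  rwa [neg_smul, ← sub_eq_add_neg] at this

section Aux

instance matLCS (n m : ℕ) : LocallyConvexSpace ℝ (Matrix (Fin n) (Fin m) ℝ) :=
  inferInstanceAs (LocallyConvexSpace ℝ (Fin n → Fin m → ℝ))

lemma psd_smul_real {N : ℕ} {M : Matrix (Fin N) (Fin N) ℝ} (hM : M.PosSemidef) {a : ℝ}
    (ha : 0 ≤ a) : (a • M).PosSemidef := by
  refine PosSemidef.of_dotProduct_mulVec_nonneg ?_ ?_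
  · rw [Matrix.IsHermitian, conjTranspose_smul, hM.1.eq, star_trivial]
  · intro x
    rw [smul_mulVec, dotProduct_smul, smul_eq_mul]
    exact mul_nonneg ha (hM.dotProduct_mulVec_nonneg x)

lemma psd_convex {N : ℕ} : Convex ℝ {M : Matrix (Fin N) (Fin N) ℝ | M.PosSemidef} := by
  intro M hM Q hQ a b ha hb hab
  exact Matrix.PosSemidef.add (psd_smul_real hM ha) (psd_smul_real hQ hb)

end Aux

theorem stmt_19 (n r : ℕ)
    (A : AffineSubspace ℝ (Matrix (Fin (n + 1)) (Fin (n + 1)) ℝ))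
    (hsymm : ∀ M ∈ A, M.IsSymm)
    (hcodim : (n + 1) * (n + 2) / 2 < Module.finrank ℝ A.direction + (r + 2).choose 2)
    (hne : ((A : Set (Matrix (Fin (n + 1)) (Fin (n + 1)) ℝ)) ∩ {M | M.PosSemidef}).Nonempty)
    (hcpt : IsCompact ((A : Set (Matrix (Fin (n + 1)) (Fin (n + 1)) ℝ)) ∩ {M | M.PosSemidef})) :
    ∃ M ∈ (A : Set (Matrix (Fin (n + 1)) (Fin (n + 1)) ℝ)) ∩ {M | M.PosSemidef},
      M.rank ≤ r := by
  classical
  set K := (A : Set (Matrix (Fin (n + 1)) (Fin (n + 1)) ℝ)) ∩ {M | M.PosSemidef} with hK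
  obtain ⟨M, hMext⟩ := hcpt.extremePoints_nonempty hne
  have hMK : M ∈ K := hMext.1
  have hMA : M ∈ A := hMK.1
  have hMpsd : M.PosSemidef := hMK.2
  refine ⟨M, hMK, ?_⟩
  have hherm : M.IsHermitian := hMpsd.1
  set ev : Fin (n+1) → ℝ := hherm.eigenvalues with hev
  have hev0 : ∀ i, 0 ≤ ev i := fun i => hMpsd.eigenvalues_nonneg i
  set U : Matrix (Fin (n+1)) (Fin (n+1)) ℝ := (hherm.eigenvectorUnitary : Matrix (Fin (n+1)) (Fin (n+1)) ℝ) with hUdef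
  have hU1 : star U * U = 1 := Unitary.coe_star_mul_self hherm.eigenvectorUnitary
  have hU2 : U * star U = 1 := Unitary.coe_mul_star_self hherm.eigenvectorUnitary
  have hspec : M = U * diagonal ev * star U := by
    have h := hherm.spectral_theorem
    rw [h]
    congr 1
  set T : Finset (Fin (n+1)) := Finset.univ.filter fun i => ev i ≠ 0 with hT
  have hrank : M.rank = T.card := by
    rw [hherm.rank_eq_card_non_zero_eigs, hT, ← Fintype.card_subtype]
  rw [hrank]
  -- the conjugation map
  set ψ : Matrix (Fin (n+1)) (Fin (n+1)) ℝ →ₗ[ℝ] Matrix (Fin (n+1)) (Fin (n+1)) ℝ :=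
    { toFun := fun H => U * H * star U
      map_add' := fun a b => by rw [mul_add, add_mul]
      map_smul' := fun c a => by
        simp only [RingHom.id_apply]; rw [mul_smul_comm, smul_mul_assoc] } with hψ
  have hψapply : ∀ H, ψ H = U * H * star U := fun H => rfl
  have hψinj : Function.Injective ψ := by
    intro a b h
    have h2 : star U * (U * a * star U) * U = star U * (U * b * star U) * U := by
      rw [hψapply, hψapply] at h; rw [h]
    simp only [← Matrix.mul_assoc, hU1, Matrix.one_mul] at h2
    rwa [Matrix.mul_assoc, Matrix.mul_assoc, hU1, Matrix.mul_one, Matrix.mul_one] at h2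
  set P : Submodule ℝ (Matrix (Fin (n+1)) (Fin (n+1)) ℝ) := (SymSupp T).map ψ with hP
  -- P is disjoint from the direction of A
  have hdisj : P ⊓ A.direction = ⊥ := by
    rw [Submodule.eq_bot_iff]
    rintro H ⟨hHP, hHdir⟩
    obtain ⟨S, hS, rfl⟩ := hHP
    by_cases hTe : T.Nonempty
    · obtain ⟨i₀, hi₀, hmin⟩ : ∃ i₀ ∈ T, ∀ i ∈ T, ev i₀ ≤ ev i := by
        obtain ⟨i₀, hi₀, h⟩ := T.exists_min_image ev hTe
        exact ⟨i₀, hi₀, h⟩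
      have hδpos : 0 < ev i₀ := by
        rcases lt_or_eq_of_le (hev0 i₀) with h | h
        · exact h
        · exact absurd h.symm (by simpa [hT] using hi₀)
      obtain ⟨ε, hεpos, hpsd1, hpsd2⟩ := key_psd ev hev0 T (ev i₀) hδpos hmin hS
      have hψd : ∀ (X : Matrix (Fin (n+1)) (Fin (n+1)) ℝ), X.PosSemidef → (ψ X).PosSemidef := by
        intro X hX
        rw [hψapply]
        have h := hX.mul_mul_conjTranspose_same U
        rwa [← Matrix.star_eq_conjTranspose] at h
      have hMψ : ψ (diagonal ev) = M := by rw [hψapply, ← hspec]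
      have h1 : M + ε • ψ S = ψ (diagonal ev + ε • S) := by
        rw [_root_.map_add, LinearMap.map_smul, hMψ]
      have h2 : M - ε • ψ S = ψ (diagonal ev - ε • S) := by
        rw [_root_.map_sub, LinearMap.map_smul, hMψ]
      have hmem1 : M + ε • ψ S ∈ K := by
        constructor
        · have : (ε • ψ S) +ᵥ M ∈ A :=
            AffineSubspace.vadd_mem_of_mem_direction (A.direction.smul_mem ε hHdir) hMA
          simpa [vadd_eq_add, add_comm] using this
        · rw [Set.mem_setOf_eq, h1]; exact hψd _ hpsd1
      have hmem2 : M - ε • ψ S ∈ K := by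
        constructor
        · have : (-(ε • ψ S)) +ᵥ M ∈ A :=
            AffineSubspace.vadd_mem_of_mem_direction
              (A.direction.neg_mem (A.direction.smul_mem ε hHdir)) hMA
          simpa [vadd_eq_add, sub_eq_add_neg, add_comm] using this
        · rw [Set.mem_setOf_eq, h2]; exact hψd _ hpsd2
      have hseg : M ∈ openSegment ℝ (M - ε • ψ S) (M + ε • ψ S) := by
        refine ⟨1/2, 1/2, by norm_num, by norm_num, by norm_num, ?_⟩
        module
      have := ((mem_extremePoints.mp hMext).2 (M - ε • ψ S) hmem2 (M + ε • ψ S) hmem1 hseg).1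
      have hz : ε • ψ S = 0 := by
        have h0 : M - ε • ψ S = M := this
        have := sub_eq_self.mp h0
        linear_combination (norm := module) this
      have : ψ S = 0 := by
        rcases smul_eq_zero.mp hz with h | h
        · exact absurd h (ne_of_gt hεpos)
        · exact h
      simpa using this
    · -- T empty: S = 0
      have hS0 : S = 0 := by
        ext i j
        exact hS.2 i j (Or.inl (fun hi => hTe ⟨i, hi⟩))
      simp [hS0]
  -- dimension count
  have hPfin : Module.finrank ℝ P = T.card * (T.card + 1) / 2 := by
    rw [hP, ← LinearEquiv.finrank_eq (Submodule.equivMapOfInjective ψ hψinj (SymSupp T))]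
    exact finrank_symSupp T (card_le_pairs T)
  have hPsym : P ≤ SymSupp (Finset.univ : Finset (Fin (n+1))) := by
    rintro H ⟨S, hS, rfl⟩
    refine ⟨?_, fun i j h => by simp at h⟩
    rw [hψapply]
    have hUsymm : star U = Uᵀ := by
      rw [Matrix.star_eq_conjTranspose, conjTranspose_eq_transpose_of_trivial]
    show (U * S * star U)ᵀ = U * S * star U
    rw [hUsymm, Matrix.transpose_mul, Matrix.transpose_mul, Matrix.transpose_transpose, hS.1,
      Matrix.mul_assoc]
  have hDsym : A.direction ≤ SymSupp (Finset.univ : Finset (Fin (n+1))) := by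
    intro v hv
    rw [AffineSubspace.mem_direction_iff_eq_vsub ⟨_, hMA⟩] at hv
    obtain ⟨p, hp, q, hq, rfl⟩ := hv
    refine ⟨?_, fun i j h => by simp at h⟩
    show (p - q)ᵀ = p - q
    rw [Matrix.transpose_sub, hsymm p hp, hsymm q hq]
  have hsymuniv : Module.finrank ℝ (SymSupp (Finset.univ : Finset (Fin (n+1))))
      = (n + 1) * (n + 2) / 2 := by
    have := finrank_symSupp (Finset.univ : Finset (Fin (n+1)))
      (card_le_pairs (Finset.univ : Finset (Fin (n+1))))
    rwa [Finset.card_univ, Fintype.card_fin] at this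
  have hsum : Module.finrank ℝ P + Module.finrank ℝ A.direction ≤ (n + 1) * (n + 2) / 2 := by
    have heq := Submodule.finrank_sup_add_finrank_inf_eq P A.direction
    rw [hdisj] at heq
    rw [finrank_bot, add_zero] at heq
    rw [← heq, ← hsymuniv]
    exact Submodule.finrank_mono (sup_le hPsym hDsym)
  rw [hPfin] at hsum
  have hch : (r + 2).choose 2 = (r + 1) * (r + 2) / 2 := by
    rw [Nat.choose_two_right]
    congr 1
    have h21 : r + 2 - 1 = r + 1 := by omega
    rw [h21]
    ring
  by_contra hcon
  push_neg at hcon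
  have hmono : (r + 1) * (r + 2) ≤ T.card * (T.card + 1) :=
    Nat.mul_le_mul (by omega) (by omega)
  have hmono2 : (r + 1) * (r + 2) / 2 ≤ T.card * (T.card + 1) / 2 :=
    Nat.div_le_div_right hmono
  rw [hch] at hcodim
  omega
end
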